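/- For n ≥ 0, the sum Σ_{(λ,μ)} (dim_Θ(λ,μ))² over all pairs of Young diagrams with 2|λ|+|μ| = n equals Σ_{l ≡ n mod 2, 0 ≤ l ≤ n} (n!)² / (2^{n−l} · l! · ((n−l)/2)!). -/

import Mathlib

open Finset

namespace Stmt13Aux

instance : DecidableEq YoungDiagram := fun μ ν =>
  decidable_of_iff (μ.cells = ν.cells) ⟨fun h => YoungDiagram.ext h, fun h => by rw [h]⟩

/-- rows where a cell can be added -/
def addable (μ : YoungDiagram) : Finset ℕ :=
  (Finset.range (μ.colLen 0 + 1)).filter (fun i => i = 0 ∨ μ.rowLen i < μ.rowLen (i - 1))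

/-- rows where a cell can be removed -/
def removable (μ : YoungDiagram) : Finset ℕ :=
  (Finset.range (μ.colLen 0)).filter (fun i => μ.rowLen (i + 1) < μ.rowLen i)

def addCell (μ : YoungDiagram) (i : ℕ) : YoungDiagram where
  cells := μ.cells ∪ (Finset.range (i + 1)).image (fun a => (a, μ.rowLen i))
  isLowerSet := by
    rintro ⟨c, d⟩ ⟨x, y⟩ ⟨hx, hy⟩ hcd
    simp only [Finset.coe_union, Set.mem_union, Finset.mem_coe, Finset.coe_image,
      Set.mem_image, Finset.mem_range, Prod.mk.injEq, YoungDiagram.mem_cells] at hcd ⊢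
    rcases hcd with h | ⟨a, ha, rfl, rfl⟩
    · exact Or.inl (μ.up_left_mem hx hy h)
    · rcases eq_or_lt_of_le hy with rfl | hy'
      · exact Or.inr ⟨x, by omega, rfl, rfl⟩
      · exact Or.inl (YoungDiagram.mem_iff_lt_rowLen.2
          (lt_of_lt_of_le hy' (μ.rowLen_anti x i (by omega))))

def eraseCell (μ : YoungDiagram) (i : ℕ) : YoungDiagram where
  cells := μ.cells.filter (fun c => ¬(i ≤ c.1 ∧ c.2 = μ.rowLen i - 1))
  isLowerSet := by
    rintro ⟨c, d⟩ ⟨x, y⟩ ⟨hx, hy⟩ hcd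
    simp only [Finset.coe_filter, Set.mem_setOf_eq, Finset.mem_coe,
      ← YoungDiagram.mem_cells] at hcd ⊢
    obtain ⟨hmem, hnot⟩ := hcd
    refine ⟨μ.up_left_mem hx hy hmem, ?_⟩
    rintro ⟨hix, rfl⟩
    have hd : d < μ.rowLen c := YoungDiagram.mem_iff_lt_rowLen.1 hmem
    have : μ.rowLen c ≤ μ.rowLen i := μ.rowLen_anti i c (le_trans hix hx)
    exact hnot ⟨le_trans hix hx, by omega⟩

theorem mem_addCell {μ : YoungDiagram} {i a b : ℕ} :
    (a, b) ∈ addCell μ i ↔ (a, b) ∈ μ ∨ (a ≤ i ∧ b = μ.rowLen i) := by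
  simp only [addCell, ← YoungDiagram.mem_cells, YoungDiagram.mem_mk, Finset.mem_union,
    Finset.mem_image, Finset.mem_range, Prod.mk.injEq]
  constructor
  · rintro (h | ⟨x, hx, rfl, rfl⟩)
    · exact Or.inl h
    · exact Or.inr ⟨by omega, rfl⟩
  · rintro (h | ⟨h1, rfl⟩)
    · exact Or.inl h
    · exact Or.inr ⟨a, by omega, rfl, rfl⟩

theorem mem_eraseCell {μ : YoungDiagram} {i a b : ℕ} :
    (a, b) ∈ eraseCell μ i ↔ (a, b) ∈ μ ∧ ¬(i ≤ a ∧ b = μ.rowLen i - 1) := by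
  simp only [eraseCell, ← YoungDiagram.mem_cells, YoungDiagram.mem_mk, Finset.mem_filter]

theorem notmem_rowLen (μ : YoungDiagram) (i : ℕ) : (i, μ.rowLen i) ∉ μ := by
  simp [YoungDiagram.mem_iff_lt_rowLen]

theorem addCell_cells {μ : YoungDiagram} {i : ℕ}
    (hi : i = 0 ∨ μ.rowLen i < μ.rowLen (i - 1)) :
    (addCell μ i).cells = insert (i, μ.rowLen i) μ.cells := by
  ext ⟨a, b⟩
  simp only [YoungDiagram.mem_cells, Finset.mem_insert, Prod.mk.injEq]
  rw [mem_addCell]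
  constructor
  · rintro (h | ⟨h1, rfl⟩)
    · exact Or.inr (by simpa using h)
    · rcases eq_or_lt_of_le h1 with rfl | h2
      · exact Or.inl ⟨rfl, rfl⟩
      · -- a < i, so row a is long enough
        have hi' : μ.rowLen i < μ.rowLen (i - 1) := by
          rcases hi with rfl | h; · omega
          · exact h
        have : μ.rowLen (i - 1) ≤ μ.rowLen a := μ.rowLen_anti a (i - 1) (by omega)
        exact Or.inr (by simpa [YoungDiagram.mem_iff_lt_rowLen] using by omega)
  · rintro (⟨rfl, rfl⟩ | h)
    · exact Or.inr ⟨le_rfl, rfl⟩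
    · exact Or.inl (by simpa using h)

theorem le_addCell (μ : YoungDiagram) (i : ℕ) : μ ≤ addCell μ i := by
  rw [← YoungDiagram.cells_subset_iff]
  exact Finset.subset_union_left

theorem addCell_card {μ : YoungDiagram} {i : ℕ}
    (hi : i = 0 ∨ μ.rowLen i < μ.rowLen (i - 1)) :
    (addCell μ i).card = μ.card + 1 := by
  show (addCell μ i).cells.card = μ.cells.card + 1
  rw [addCell_cells hi, Finset.card_insert_of_notMem (by simpa using notmem_rowLen μ i)]

theorem cover_iff {μ ν : YoungDiagram} :
    (μ ≤ ν ∧ ν.card = μ.card + 1) ↔ ∃ i ∈ addable μ, ν = addCell μ i := by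
  constructor
  · rintro ⟨hle, hcard⟩
    have hsub : μ.cells ⊆ ν.cells := YoungDiagram.cells_subset_iff.2 hle
    have hcard' : ν.cells.card = μ.cells.card + 1 := hcard
    have hdiff : (ν.cells \ μ.cells).card = 1 := by
      rw [Finset.card_sdiff_of_subset hsub]; omega
    obtain ⟨c, hc⟩ := Finset.card_eq_one.1 hdiff
    obtain ⟨i, j⟩ := c
    have hcν : (i, j) ∈ ν := by
      have : (i, j) ∈ ν.cells \ μ.cells := hc ▸ Finset.mem_singleton_self _
      simpa using (Finset.mem_sdiff.1 this).1
    have hcμ : (i, j) ∉ μ := by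
      have : (i, j) ∈ ν.cells \ μ.cells := hc ▸ Finset.mem_singleton_self _
      simpa using (Finset.mem_sdiff.1 this).2
    have huniq : ∀ x : ℕ × ℕ, x ∈ ν → x ∉ μ → x = (i, j) := by
      intro x hx1 hx2
      have : x ∈ ν.cells \ μ.cells := Finset.mem_sdiff.2 ⟨hx1, hx2⟩
      simpa [hc] using this
    have hj : j = μ.rowLen i := by
      have hge : μ.rowLen i ≤ j := by
        by_contra h
        exact hcμ (YoungDiagram.mem_iff_lt_rowLen.2 (by omega))
      rcases eq_or_lt_of_le hge with h | h
      · omega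
      · exfalso
        have h1 : (i, μ.rowLen i) ∈ ν := ν.up_left_mem le_rfl (le_of_lt h) hcν
        have := huniq _ h1 (notmem_rowLen μ i)
        simp at this; omega
    subst hj
    have hvalid : i = 0 ∨ μ.rowLen i < μ.rowLen (i - 1) := by
      rcases Nat.eq_zero_or_pos i with rfl | hpos
      · exact Or.inl rfl
      · right
        have h1 : (i - 1, μ.rowLen i) ∈ ν := ν.up_left_mem (by omega) le_rfl hcν
        have h2 : (i - 1, μ.rowLen i) ∈ μ := by
          by_contra h
          have := huniq _ h1 h
          simp at this; omega
        exact YoungDiagram.mem_iff_lt_rowLen.1 h2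
    refine ⟨i, ?_, ?_⟩
    · simp only [addable, Finset.mem_filter, Finset.mem_range]
      refine ⟨?_, hvalid⟩
      rcases hvalid with rfl | h
      · omega
      · have : 0 < μ.rowLen (i - 1) := by omega
        have : (i - 1, 0) ∈ μ := YoungDiagram.mem_iff_lt_rowLen.2 this
        have := YoungDiagram.mem_iff_lt_colLen.1 this
        rcases Nat.eq_zero_or_pos i with rfl | hpos
        · omega
        · omega
    · ext ⟨x1, x2⟩
      simp only [YoungDiagram.mem_cells]
      rw [mem_addCell]
      constructor
      · intro hx
        by_cases h : (x1, x2) ∈ μ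
        · exact Or.inl h
        · have := huniq _ hx h
          simp only [Prod.mk.injEq] at this
          exact Or.inr ⟨le_of_eq this.1, this.2⟩
      · rintro (h | ⟨h1, rfl⟩)
        · exact hsub h
        · exact ν.up_left_mem h1 le_rfl hcν
  · rintro ⟨i, hi, rfl⟩
    simp only [addable, Finset.mem_filter, Finset.mem_range] at hi
    exact ⟨le_addCell μ i, addCell_card hi.2⟩

theorem eraseCell_cells {μ : YoungDiagram} {i : ℕ}
    (hi : μ.rowLen (i + 1) < μ.rowLen i) :
    (eraseCell μ i).cells = μ.cells.erase (i, μ.rowLen i - 1) := by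
  ext ⟨a, b⟩
  simp only [YoungDiagram.mem_cells, Finset.mem_erase, Prod.mk.injEq]
  rw [mem_eraseCell]
  constructor
  · rintro ⟨h1, h2⟩
    refine ⟨?_, h1⟩
    rintro ⟨rfl, rfl⟩
    exact h2 ⟨le_rfl, rfl⟩
  · rintro ⟨hne, h1⟩
    refine ⟨h1, ?_⟩
    rintro ⟨hia, rfl⟩
    rcases eq_or_lt_of_le hia with rfl | h2
    · exact hne rfl
    · have hb : μ.rowLen i - 1 < μ.rowLen a := YoungDiagram.mem_iff_lt_rowLen.1 h1
      have : μ.rowLen a ≤ μ.rowLen (i + 1) := μ.rowLen_anti (i + 1) a (by omega)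
      omega

theorem corner_mem {μ : YoungDiagram} {i : ℕ} (hi : μ.rowLen (i + 1) < μ.rowLen i) :
    (i, μ.rowLen i - 1) ∈ μ :=
  YoungDiagram.mem_iff_lt_rowLen.2 (by omega)

theorem eraseCell_le (μ : YoungDiagram) (i : ℕ) : eraseCell μ i ≤ μ := by
  rw [← YoungDiagram.cells_subset_iff]
  exact Finset.filter_subset _ _

theorem eraseCell_card {μ : YoungDiagram} {i : ℕ} (hi : μ.rowLen (i + 1) < μ.rowLen i) :
    μ.card = (eraseCell μ i).card + 1 := by
  show μ.cells.card = (eraseCell μ i).cells.card + 1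
  rw [eraseCell_cells hi, Finset.card_erase_of_mem (by simpa using corner_mem hi)]
  have : 0 < μ.cells.card := Finset.card_pos.2 ⟨_, by simpa using corner_mem hi⟩
  omega

/-- helper: determine rowLen from memberships -/
theorem rowLen_eq_of {μ ν : YoungDiagram} {i : ℕ}
    (h : ∀ j, ((i, j) ∈ ν ↔ (i, j) ∈ μ)) : ν.rowLen i = μ.rowLen i := by
  have h1 := fun j => (YoungDiagram.mem_iff_lt_rowLen (μ := ν) (i := i) (j := j)).symm.trans
    ((h j).trans (YoungDiagram.mem_iff_lt_rowLen))
  by_contra hne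
  rcases Nat.lt_or_ge (ν.rowLen i) (μ.rowLen i) with h2 | h2
  · exact absurd ((h1 (ν.rowLen i)).2 h2) (by omega)
  · have h2' : μ.rowLen i < ν.rowLen i := by omega
    exact absurd ((h1 (μ.rowLen i)).1 h2') (by omega)

theorem addCell_rowLen_self {μ : YoungDiagram} {i : ℕ}
    (hi : i = 0 ∨ μ.rowLen i < μ.rowLen (i - 1)) :
    (addCell μ i).rowLen i = μ.rowLen i + 1 := by
  have h1 : (i, μ.rowLen i) ∈ addCell μ i := mem_addCell.2 (Or.inr ⟨le_rfl, rfl⟩)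
  have h2 : (i, μ.rowLen i + 1) ∉ addCell μ i := by
    rw [mem_addCell]
    rintro (h | ⟨-, h⟩)
    · exact absurd (YoungDiagram.mem_iff_lt_rowLen.1 h) (by omega)
    · omega
  have l1 := YoungDiagram.mem_iff_lt_rowLen.1 h1
  rw [YoungDiagram.mem_iff_lt_rowLen] at h2
  omega

theorem addCell_rowLen_gt {μ : YoungDiagram} {i j : ℕ} (hj2 : i < j) :
    (addCell μ i).rowLen j = μ.rowLen j := by
  apply rowLen_eq_of
  intro k
  rw [mem_addCell]
  constructor
  · rintro (h | ⟨h1, rfl⟩)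
    · exact h
    · omega
  · exact Or.inl

theorem cover_iff' {μ ν : YoungDiagram} :
    (μ ≤ ν ∧ ν.card = μ.card + 1) ↔ ∃ i ∈ removable ν, μ = eraseCell ν i := by
  rw [cover_iff]
  constructor
  · rintro ⟨i, hi, rfl⟩
    simp only [addable, Finset.mem_filter, Finset.mem_range] at hi
    obtain ⟨hirange, hival⟩ := hi
    have hself := addCell_rowLen_self hival
    have hnext : (addCell μ i).rowLen (i + 1) = μ.rowLen (i + 1) :=
      addCell_rowLen_gt (by omega)
    have hrem : (addCell μ i).rowLen (i + 1) < (addCell μ i).rowLen i := by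
      have := μ.rowLen_anti i (i + 1) (by omega)
      omega
    refine ⟨i, ?_, ?_⟩
    · simp only [removable, Finset.mem_filter, Finset.mem_range]
      refine ⟨?_, hrem⟩
      have : (i, 0) ∈ addCell μ i := YoungDiagram.mem_iff_lt_rowLen.2 (by omega)
      exact YoungDiagram.mem_iff_lt_colLen.1 this
    · -- μ = eraseCell (addCell μ i) i
      ext ⟨a, b⟩
      show (a, b) ∈ μ ↔ (a, b) ∈ eraseCell (addCell μ i) i
      rw [mem_eraseCell, mem_addCell, hself]
      simp only [Nat.add_sub_cancel]
      constructor
      · intro hc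
        refine ⟨Or.inl hc, ?_⟩
        rintro ⟨hia, rfl⟩
        have hb : μ.rowLen i < μ.rowLen a := YoungDiagram.mem_iff_lt_rowLen.1 hc
        have : μ.rowLen a ≤ μ.rowLen i := μ.rowLen_anti i a hia
        omega
      · rintro ⟨h1, h2⟩
        rcases h1 with h | ⟨h1, rfl⟩
        · exact h
        · rcases eq_or_lt_of_le h1 with rfl | hlt
          · exact absurd ⟨le_rfl, rfl⟩ h2
          · have hiv : μ.rowLen i < μ.rowLen (i - 1) := by
              rcases hival with rfl | h; · omega
              · exact h
            have : μ.rowLen (i - 1) ≤ μ.rowLen a := μ.rowLen_anti a (i - 1) (by omega)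
            exact YoungDiagram.mem_iff_lt_rowLen.2 (by omega)
  · rintro ⟨i, hi, rfl⟩
    simp only [removable, Finset.mem_filter, Finset.mem_range] at hi
    obtain ⟨hirange, hival⟩ := hi
    -- show addCell (eraseCell ν i) i = ν with i addable for eraseCell ν i
    have hcorner := corner_mem hival
    have hpos : 0 < ν.rowLen i := by omega
    have herl : (eraseCell ν i).rowLen i = ν.rowLen i - 1 := by
      have h1 : (i, ν.rowLen i - 1) ∉ eraseCell ν i := by
        rw [mem_eraseCell]; rintro ⟨-, h⟩; exact h ⟨le_rfl, rfl⟩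
      rw [YoungDiagram.mem_iff_lt_rowLen] at h1
      have h2 : ∀ b, b < ν.rowLen i - 1 → (i, b) ∈ eraseCell ν i := by
        intro b hb
        rw [mem_eraseCell]
        exact ⟨YoungDiagram.mem_iff_lt_rowLen.2 (by omega), by omega⟩
      rcases Nat.eq_zero_or_pos (ν.rowLen i - 1) with h0 | hp
      · omega
      · have := YoungDiagram.mem_iff_lt_rowLen.1 (h2 (ν.rowLen i - 2) (by omega))
        omega
    have herl2 : ∀ a, a < i → (eraseCell ν i).rowLen a = ν.rowLen a := by
      intro a ha
      apply rowLen_eq_of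
      intro k
      rw [mem_eraseCell]
      constructor
      · exact fun h => h.1
      · intro h
        exact ⟨h, by rintro ⟨h1, -⟩; omega⟩
    have haddable : i = 0 ∨ (eraseCell ν i).rowLen i < (eraseCell ν i).rowLen (i - 1) := by
      rcases Nat.eq_zero_or_pos i with rfl | hp
      · exact Or.inl rfl
      · right
        rw [herl, herl2 (i - 1) (by omega)]
        have := ν.rowLen_anti (i - 1) i (by omega)
        omega
    refine ⟨i, ?_, ?_⟩
    · simp only [addable, Finset.mem_filter, Finset.mem_range]
      refine ⟨?_, haddable⟩
      have h1 : (i, 0) ∈ ν := YoungDiagram.mem_iff_lt_rowLen.2 (by omega)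
      have := YoungDiagram.mem_iff_lt_colLen.1 h1
      -- colLen of eraseCell ≥ colLen ν - perhaps; need i < (eraseCell ν i).colLen 0 + 1
      rcases Nat.eq_zero_or_pos i with rfl | hp
      · omega
      · have h2 : (i - 1, 0) ∈ eraseCell ν i := by
          rw [mem_eraseCell]
          refine ⟨ν.up_left_mem (by omega) le_rfl h1, ?_⟩
          rintro ⟨h3, -⟩; omega
        have := YoungDiagram.mem_iff_lt_colLen.1 h2
        omega
    · -- ν = addCell (eraseCell ν i) i
      ext ⟨a, b⟩
      show (a, b) ∈ ν ↔ (a, b) ∈ addCell (eraseCell ν i) i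
      rw [mem_addCell, mem_eraseCell, herl]
      constructor
      · intro h
        by_cases h2 : i ≤ a ∧ b = ν.rowLen i - 1
        · right
          obtain ⟨h3, rfl⟩ := h2
          rcases eq_or_lt_of_le h3 with rfl | h4
          · exact ⟨le_rfl, by omega⟩
          · exfalso
            have hb : ν.rowLen i - 1 < ν.rowLen a := YoungDiagram.mem_iff_lt_rowLen.1 h
            have : ν.rowLen a ≤ ν.rowLen (i + 1) := ν.rowLen_anti (i + 1) a (by omega)
            omega
        · exact Or.inl ⟨h, h2⟩
      · rintro (⟨h, -⟩ | ⟨h1, rfl⟩)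
        · exact h
        · have : ν.rowLen i ≤ ν.rowLen a := ν.rowLen_anti a i h1
          exact YoungDiagram.mem_iff_lt_rowLen.2 (by omega)

theorem card_upper {μ : YoungDiagram} (T : Finset YoungDiagram)
    (hT : ∀ ν, ν ∈ T ↔ (μ ≤ ν ∧ ν.card = μ.card + 1)) : T.card = (addable μ).card := by
  symm
  apply Finset.card_bij (fun i _ => addCell μ i)
  · intro i hi
    exact (hT _).2 (cover_iff.2 ⟨i, hi, rfl⟩)
  · intro i hi i' hi' heq
    simp only [addable, Finset.mem_filter, Finset.mem_range] at hi hi'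
    have h1 : (i, μ.rowLen i) ∈ addCell μ i' := heq ▸ mem_addCell.2 (Or.inr ⟨le_rfl, rfl⟩)
    have h2 : (i', μ.rowLen i') ∈ addCell μ i := heq ▸ mem_addCell.2 (Or.inr ⟨le_rfl, rfl⟩)
    rcases mem_addCell.1 h1 with h | ⟨h, -⟩
    · exact absurd h (notmem_rowLen μ i)
    rcases mem_addCell.1 h2 with h' | ⟨h', -⟩
    · exact absurd h' (notmem_rowLen μ i')
    omega
  · intro ν hν
    obtain ⟨i, hi, rfl⟩ := cover_iff.1 ((hT ν).1 hν)
    exact ⟨i, hi, rfl⟩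

theorem card_lower {ν : YoungDiagram} (S : Finset YoungDiagram)
    (hS : ∀ μ, μ ∈ S ↔ (μ ≤ ν ∧ ν.card = μ.card + 1)) : S.card = (removable ν).card := by
  symm
  apply Finset.card_bij (fun i _ => eraseCell ν i)
  · intro i hi
    exact (hS _).2 (cover_iff'.2 ⟨i, hi, rfl⟩)
  · intro i hi i' hi' heq
    simp only [removable, Finset.mem_filter, Finset.mem_range] at hi hi'
    have k1 : (i, ν.rowLen i - 1) ∉ eraseCell ν i := by
      rw [mem_eraseCell]; rintro ⟨-, h⟩; exact h ⟨le_rfl, rfl⟩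
    have k2 : (i', ν.rowLen i' - 1) ∉ eraseCell ν i' := by
      rw [mem_eraseCell]; rintro ⟨-, h⟩; exact h ⟨le_rfl, rfl⟩
    rw [heq] at k1; rw [← heq] at k2
    rw [mem_eraseCell] at k1 k2
    push_neg at k1 k2
    have m1 := k1 (corner_mem hi.2)
    have m2 := k2 (corner_mem hi'.2)
    omega
  · intro μ hμ
    obtain ⟨i, hi, rfl⟩ := cover_iff'.1 ((hS μ).1 hμ)
    exact ⟨i, hi, rfl⟩

theorem addable_card (μ : YoungDiagram) :
    (addable μ).card = (removable μ).card + 1 := by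
  have h : addable μ = insert 0 ((removable μ).image Nat.succ) := by
    ext i
    simp only [addable, removable, Finset.mem_insert, Finset.mem_image, Finset.mem_filter,
      Finset.mem_range]
    constructor
    · rintro ⟨h1, h2 | h2⟩
      · exact Or.inl h2
      · rcases Nat.eq_zero_or_pos i with rfl | hp
        · exact Or.inl rfl
        · exact Or.inr ⟨i - 1, ⟨by omega, by
            have : i - 1 + 1 = i := by omega
            rw [this]; exact h2⟩, by omega⟩
    · rintro (rfl | ⟨j, ⟨hj1, hj2⟩, rfl⟩)
      · exact ⟨by omega, Or.inl rfl⟩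
      · refine ⟨by omega, Or.inr ?_⟩
        simpa using hj2
  rw [h, Finset.card_insert_of_notMem (by simp), Finset.card_image_of_injective _
    Nat.succ_injective]

theorem card_zero_iff {μ : YoungDiagram} : μ.card = 0 ↔ μ = ⊥ := by
  constructor
  · intro h
    have : μ.cells = ∅ := Finset.card_eq_zero.1 h
    ext c
    simp [← YoungDiagram.mem_cells, this]
  · rintro rfl
    simp [YoungDiagram.card, YoungDiagram.cells_bot]

theorem eq_of_le_card {μ κ : YoungDiagram} (h : μ ≤ κ) (hc : κ.card ≤ μ.card) : μ = κ := by
  have h1 : μ.cells ⊆ κ.cells := YoungDiagram.cells_subset_iff.2 h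
  have := Finset.eq_of_subset_of_card_le h1 hc
  ext c
  simp [← YoungDiagram.mem_cells, this]

theorem card_common {μ κ : YoungDiagram} (hcard : κ.card = μ.card) (hne : κ ≠ μ)
    (A B : Finset YoungDiagram)
    (hA : ∀ ν, ν ∈ A ↔ ((μ ≤ ν ∧ ν.card = μ.card + 1) ∧ (κ ≤ ν ∧ ν.card = κ.card + 1)))
    (hB : ∀ ρ, ρ ∈ B ↔ ((ρ ≤ μ ∧ μ.card = ρ.card + 1) ∧ (ρ ≤ κ ∧ κ.card = ρ.card + 1))) :
    A.card = B.card := by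
  have hm : 1 ≤ μ.card := by
    by_contra h
    have h1 : μ = ⊥ := card_zero_iff.1 (by omega)
    have h2 : κ = ⊥ := card_zero_iff.1 (by omega)
    exact hne (h2.trans h1.symm)
  have key : (μ ⊔ κ).card + (μ ⊓ κ).card = μ.card + κ.card := by
    show (μ ⊔ κ).cells.card + (μ ⊓ κ).cells.card = μ.cells.card + κ.cells.card
    rw [YoungDiagram.cells_sup, YoungDiagram.cells_inf]
    exact Finset.card_union_add_card_inter _ _
  have hsupcard : μ.card + 1 ≤ (μ ⊔ κ).card := by
    by_contra h
    have h1 : μ ⊔ κ ≤ μ := by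
      apply le_of_eq
      exact (eq_of_le_card le_sup_left (by omega)).symm
    exact hne (le_antisymm (le_trans le_sup_right h1) (eq_of_le_card (le_trans
      (le_sup_right) h1) (by omega) ▸ le_refl κ) )
  have hinfcard : (μ ⊓ κ).card + 1 ≤ μ.card := by
    have h2 : (μ ⊓ κ).card ≤ μ.card := by
      apply Finset.card_le_card
      rw [YoungDiagram.cells_inf]
      exact Finset.inter_subset_left
    rcases Nat.lt_or_ge ((μ ⊓ κ).card) μ.card with h | h
    · omega
    · exfalso
      have : μ ⊓ κ = μ := (eq_of_le_card inf_le_left (by omega)).symm ▸ rfl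
      have h3 : μ ⊓ κ = μ := eq_of_le_card inf_le_left (by omega)
      have : μ ≤ κ := h3 ▸ inf_le_right
      exact hne (eq_of_le_card this (by omega)).symm
  have hAchar : ∀ ν ∈ A, ν = μ ⊔ κ ∧ (μ ⊔ κ).card = μ.card + 1 := by
    intro ν hν
    obtain ⟨⟨h1, h2⟩, ⟨h3, h4⟩⟩ := (hA ν).1 hν
    have h5 : μ ⊔ κ ≤ ν := sup_le h1 h3
    have h6 : ν = μ ⊔ κ := (eq_of_le_card h5 (by omega)).symm
    subst h6
    exact ⟨rfl, h2⟩
  have hBchar : ∀ ρ ∈ B, ρ = μ ⊓ κ ∧ (μ ⊓ κ).card + 1 = μ.card := by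
    intro ρ hρ
    obtain ⟨⟨h1, h2⟩, ⟨h3, h4⟩⟩ := (hB ρ).1 hρ
    have h5 : ρ ≤ μ ⊓ κ := le_inf h1 h3
    have h6 : ρ = μ ⊓ κ := eq_of_le_card h5 (by omega)
    subst h6
    exact ⟨rfl, by omega⟩
  by_cases hcond : (μ ⊔ κ).card = μ.card + 1
  · have hcond' : (μ ⊓ κ).card + 1 = μ.card := by omega
    have hAeq : A = {μ ⊔ κ} := by
      ext ν
      simp only [Finset.mem_singleton]
      constructor
      · exact fun h => (hAchar ν h).1
      · rintro rfl
        exact (hA _).2 ⟨⟨le_sup_left, hcond⟩, ⟨le_sup_right, by omega⟩⟩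
    have hBeq : B = {μ ⊓ κ} := by
      ext ρ
      simp only [Finset.mem_singleton]
      constructor
      · exact fun h => (hBchar ρ h).1
      · rintro rfl
        exact (hB _).2 ⟨⟨inf_le_left, by omega⟩, ⟨inf_le_right, by omega⟩⟩
    rw [hAeq, hBeq, Finset.card_singleton, Finset.card_singleton]
  · have hcond' : ¬((μ ⊓ κ).card + 1 = μ.card) := by omega
    have hAeq : A = ∅ := by
      ext ν
      simp only [Finset.notMem_empty, iff_false]
      intro h
      exact hcond (hAchar ν h).2
    have hBeq : B = ∅ := by
      ext ρ
      simp only [Finset.notMem_empty, iff_false]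
      intro h
      exact hcond' (hBchar ρ h).2
    rw [hAeq, hBeq]

section Sums

variable (below : YoungDiagram → Finset YoungDiagram)
  (hbelow : ∀ ν μ, μ ∈ below ν ↔ μ ≤ ν ∧ ν.card = μ.card + 1)
  (f : YoungDiagram → ℕ)
  (hf0 : f ⊥ = 1)
  (hf : ∀ ν, ν ≠ ⊥ → f ν = ∑ μ ∈ below ν, f μ)
  (level : ℕ → Finset YoungDiagram)
  (hlevel : ∀ m lam, lam ∈ level m ↔ lam.card = m)

include hbelow hf0 hf hlevel

theorem sum_above :
    ∀ m : ℕ, ∀ μ : YoungDiagram, μ.card = m →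
      ∑ ν ∈ (level (m + 1)).filter (fun ν => μ ∈ below ν), f ν = (m + 1) * f μ := by
  intro m
  induction m using Nat.strong_induction_on with
  | _ m IH =>
  intro μ hμ
  set T : YoungDiagram → Finset YoungDiagram :=
    fun κ => (level (m + 1)).filter (fun ν => κ ∈ below ν) with hT
  have hmemT : ∀ κ : YoungDiagram, κ.card = m →
      ∀ ν, ν ∈ T κ ↔ (κ ≤ ν ∧ ν.card = κ.card + 1) := by
    intro κ hκ ν
    simp only [hT, Finset.mem_filter, hlevel, hbelow]
    constructor
    · rintro ⟨h1, h2, h3⟩; exact ⟨h2, h3⟩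
    · rintro ⟨h1, h2⟩; exact ⟨by omega, h1, h2⟩
  -- step 1: expand f ν
  have step1 : ∑ ν ∈ T μ, f ν = ∑ ν ∈ T μ, ∑ κ ∈ below ν, f κ := by
    apply Finset.sum_congr rfl
    intro ν hν
    have hν1 := ((hmemT μ hμ ν).1 hν).2
    apply hf
    intro hbot
    rw [hbot] at hν1
    have : (⊥ : YoungDiagram).card = 0 := card_zero_iff.2 rfl
    omega
  -- step 2: below ν = (level m).filter (· ∈ below ν)
  have step2 : ∀ ν ∈ T μ, ∑ κ ∈ below ν, f κ =
      ∑ κ ∈ level m, if κ ∈ below ν then f κ else 0 := by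
    intro ν hν
    have hν1 := ((hmemT μ hμ ν).1 hν).2
    rw [← Finset.sum_filter]
    congr 1
    ext κ
    simp only [Finset.mem_filter, hlevel]
    constructor
    · intro h
      have := (hbelow ν κ).1 h
      exact ⟨by omega, h⟩
    · exact fun h => h.2
  -- combine + swap
  have step3 : ∑ ν ∈ T μ, f ν =
      ∑ κ ∈ level m, ∑ ν ∈ T μ, (if κ ∈ below ν then f κ else 0) := by
    rw [step1, Finset.sum_congr rfl step2, Finset.sum_comm]
  -- inner sums as cards
  have step4 : ∀ κ, ∑ ν ∈ T μ, (if κ ∈ below ν then f κ else 0) =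
      ((T μ).filter (fun ν => κ ∈ below ν)).card * f κ := by
    intro κ
    rw [← Finset.sum_filter, Finset.sum_const, smul_eq_mul]
  -- diagonal card
  have hdiagT : (T μ).filter (fun ν => μ ∈ below ν) = T μ := by
    apply Finset.filter_eq_self.2
    intro ν hν
    simp only [hT, Finset.mem_filter] at hν
    exact hν.2
  have hcard_above : (T μ).card = (below μ).card + 1 := by
    rw [card_upper (μ := μ) (T μ) (hmemT μ hμ), addable_card,
      ← card_lower (below μ) (hbelow μ)]
  -- off-diagonal cards
  have hoff : ∀ κ ∈ level m, κ ≠ μ →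
      ((T μ).filter (fun ν => κ ∈ below ν)).card =
      ((below μ).filter (fun ρ => ρ ∈ below κ)).card := by
    intro κ hκ hκne
    have hκc : κ.card = m := (hlevel m κ).1 hκ
    refine card_common (by omega) hκne _ _ ?_ ?_
    · intro ν
      simp only [Finset.mem_filter]
      rw [hmemT μ hμ ν, hbelow]
    · intro ρ
      simp only [Finset.mem_filter]
      rw [hbelow, hbelow]
  have hμlevel : μ ∈ level m := (hlevel m μ).2 hμ
  -- diagonal of the B side
  have hdiagB : ((below μ).filter (fun ρ => ρ ∈ below μ)).card = (below μ).card := by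
    rw [Finset.filter_eq_self.2 (fun ρ hρ => hρ)]
  -- put it together
  have step5 : ∑ ν ∈ T μ, f ν =
      (∑ κ ∈ level m, ((below μ).filter (fun ρ => ρ ∈ below κ)).card * f κ) + f μ := by
    rw [step3, Finset.sum_congr rfl (fun κ _ => step4 κ)]
    rw [← Finset.sum_erase_add _ _ hμlevel, ← Finset.sum_erase_add _ _ hμlevel]
    rw [hdiagT, hcard_above, hdiagB]
    have : ∑ κ ∈ (level m).erase μ, ((T μ).filter (fun ν => κ ∈ below ν)).card * f κ =
        ∑ κ ∈ (level m).erase μ, ((below μ).filter (fun ρ => ρ ∈ below κ)).card * f κ := by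
      apply Finset.sum_congr rfl
      intro κ hκ
      rw [hoff κ (Finset.mem_of_mem_erase hκ) (Finset.ne_of_mem_erase hκ)]
    rw [this]; ring
  -- step 7: evaluate the remaining double sum via IH
  have step6 : ∑ κ ∈ level m, ((below μ).filter (fun ρ => ρ ∈ below κ)).card * f κ
      = m * f μ := by
    have e1 : ∀ κ ∈ level m, ((below μ).filter (fun ρ => ρ ∈ below κ)).card * f κ =
        ∑ ρ ∈ below μ, (if ρ ∈ below κ then f κ else 0) := by
      intro κ _
      rw [← Finset.sum_filter, Finset.sum_const, smul_eq_mul]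
    rw [Finset.sum_congr rfl e1, Finset.sum_comm]
    have e2 : ∀ ρ ∈ below μ, ∑ κ ∈ level m, (if ρ ∈ below κ then f κ else 0) =
        m * f ρ := by
      intro ρ hρ
      have hρc : ρ.card + 1 = m := by
        have := (hbelow μ ρ).1 hρ
        omega
      have := IH ρ.card (by omega) ρ rfl
      rw [hρc] at this
      rw [Finset.sum_filter] at this
      rw [this]
    rw [Finset.sum_congr rfl e2]
    by_cases hbot : μ = ⊥
    · subst hbot
      have : below ⊥ = ∅ := by
        ext κ
        simp only [Finset.notMem_empty, iff_false]
        intro h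
        have := (hbelow ⊥ κ).1 h
        have h0 : (⊥ : YoungDiagram).card = 0 := card_zero_iff.2 rfl
        omega
      have hm0 : m = 0 := by
        have h0 : (⊥ : YoungDiagram).card = 0 := card_zero_iff.2 rfl
        omega
      simp [this, hm0]
    · rw [← Finset.mul_sum, ← hf μ hbot]
  rw [step5, step6]
  ring

theorem sum_f_sq : ∀ m : ℕ, ∑ lam ∈ level m, (f lam) ^ 2 = Nat.factorial m := by
  intro m
  induction m with
  | zero =>
    have : level 0 = {⊥} := by
      ext κ
      rw [hlevel, Finset.mem_singleton, card_zero_iff]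
    rw [this]
    simp [hf0, Nat.factorial]
  | succ m IHm =>
    have expand : ∀ ν ∈ level (m + 1), (f ν) ^ 2 =
        ∑ κ ∈ level m, (if κ ∈ below ν then f κ * f ν else 0) := by
      intro ν hν
      have hνc : ν.card = m + 1 := (hlevel _ ν).1 hν
      have hνbot : ν ≠ ⊥ := by
        intro h
        rw [h] at hνc
        have : (⊥ : YoungDiagram).card = 0 := card_zero_iff.2 rfl
        omega
      have : (f ν) ^ 2 = (∑ κ ∈ below ν, f κ) * f ν := by
        rw [← hf ν hνbot]; ring
      rw [this, Finset.sum_mul]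
      rw [← Finset.sum_filter]
      congr 1
      ext κ
      simp only [Finset.mem_filter, hlevel]
      constructor
      · intro h
        have := (hbelow ν κ).1 h
        exact ⟨by omega, h⟩
      · exact fun h => h.2
    rw [Finset.sum_congr rfl expand, Finset.sum_comm]
    have inner : ∀ κ ∈ level m, ∑ ν ∈ level (m + 1), (if κ ∈ below ν then f κ * f ν else 0)
        = (m + 1) * (f κ) ^ 2 := by
      intro κ hκ
      have hκc : κ.card = m := (hlevel _ κ).1 hκ
      have e1 : ∑ ν ∈ level (m + 1), (if κ ∈ below ν then f κ * f ν else 0) =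
          f κ * ∑ ν ∈ (level (m + 1)).filter (fun ν => κ ∈ below ν), f ν := by
        rw [Finset.mul_sum, ← Finset.sum_filter]
      rw [e1, sum_above below hbelow f hf0 hf level hlevel m κ hκc]
      ring
    rw [Finset.sum_congr rfl inner, ← Finset.mul_sum, IHm, Nat.factorial_succ]

end Sums

end Stmt13Aux

/-- Dimension sum for the coupled Young graph: for every `n`,
`Σ_{2|λ|+|μ| = n} (dimΘ (λ,μ))² = Σ_{l ≡ n mod 2, 0 ≤ l ≤ n} (n!)² / (2^{n-l} · l! · ((n-l)/2)!)`,
where `dimΘ (λ,μ) = (1/2^{|λ|}) · (|μ|+2|λ|)!/(|λ|!·|μ|!) · f λ · f μ` and `f` is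
the number of standard Young tableaux. -/
theorem stmt13
    (below : YoungDiagram → Finset YoungDiagram)
    (hbelow : ∀ ν μ, μ ∈ below ν ↔ μ ≤ ν ∧ ν.card = μ.card + 1)
    (f : YoungDiagram → ℕ)
    (hf0 : f ⊥ = 1)
    (hf : ∀ ν, ν ≠ ⊥ → f ν = ∑ μ ∈ below ν, f μ)
    (level : ℕ → Finset YoungDiagram)
    (hlevel : ∀ m lam, lam ∈ level m ↔ lam.card = m)
    (dimΘ : YoungDiagram → YoungDiagram → ℚ)
    (hdim : ∀ l m : YoungDiagram,
      dimΘ l m = (1 / 2 ^ l.card) *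
          ((Nat.factorial (m.card + 2 * l.card) : ℚ) /
            (Nat.factorial l.card * Nat.factorial m.card)) *
        (f l : ℚ) * (f m : ℚ)) :
    ∀ n : ℕ,
      (∑ k ∈ Finset.range (n / 2 + 1), ∑ l ∈ level k, ∑ m ∈ level (n - 2 * k),
          (dimΘ l m) ^ 2) =
        ∑ l ∈ (Finset.range (n + 1)).filter (fun l => l % 2 = n % 2),
          ((Nat.factorial n : ℚ)) ^ 2 /
            (2 ^ (n - l) * Nat.factorial l * Nat.factorial ((n - l) / 2)) := by
  intro n
  have hsqN := Stmt13Aux.sum_f_sq below hbelow f hf0 hf level hlevel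
  have hsq : ∀ m : ℕ, (∑ lam ∈ level m, ((f lam : ℚ)) ^ 2) = (Nat.factorial m : ℚ) := by
    intro m
    rw [← hsqN m]
    push_cast
    ring
  have hinner : ∀ k ∈ Finset.range (n / 2 + 1),
      (∑ l ∈ level k, ∑ m ∈ level (n - 2 * k), (dimΘ l m) ^ 2) =
      ((Nat.factorial n : ℚ)) ^ 2 /
        (2 ^ (2 * k) * Nat.factorial k * Nat.factorial (n - 2 * k)) := by
    intro k hk
    rw [Finset.mem_range] at hk
    have hk2 : 2 * k ≤ n := by omega
    set C : ℚ := (1 / 2 ^ k * ((Nat.factorial n : ℚ) /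
        (Nat.factorial k * Nat.factorial (n - 2 * k)))) ^ 2 with hC
    have hrow : ∀ l ∈ level k, ∑ m ∈ level (n - 2 * k), (dimΘ l m) ^ 2 =
        (C * (Nat.factorial (n - 2 * k) : ℚ)) * (f l : ℚ) ^ 2 := by
      intro l hl
      have hlc : l.card = k := (hlevel _ _).1 hl
      have e : ∀ m ∈ level (n - 2 * k), (dimΘ l m) ^ 2 =
          (C * (f l : ℚ) ^ 2) * (f m : ℚ) ^ 2 := by
        intro m hm
        have hmc : m.card = n - 2 * k := (hlevel _ _).1 hm
        rw [hdim, hlc, hmc]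
        have hn : n - 2 * k + 2 * k = n := by omega
        rw [hn, hC]
        ring
      rw [Finset.sum_congr rfl e, ← Finset.mul_sum, hsq (n - 2 * k)]
      ring
    rw [Finset.sum_congr rfl hrow, ← Finset.mul_sum, hsq k]
    have hkfac : (Nat.factorial k : ℚ) ≠ 0 := Nat.cast_ne_zero.2 (Nat.factorial_ne_zero k)
    have hjfac : (Nat.factorial (n - 2 * k) : ℚ) ≠ 0 :=
      Nat.cast_ne_zero.2 (Nat.factorial_ne_zero _)
    have h2 : (2 : ℚ) ^ k ≠ 0 := pow_ne_zero _ two_ne_zero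
    rw [show (2 : ℚ) ^ (2 * k) = ((2 : ℚ) ^ k) ^ 2 by rw [← pow_mul, Nat.mul_comm], hC]
    field_simp
  rw [Finset.sum_congr rfl hinner]
  apply Finset.sum_bij (i := fun (k : ℕ) (_ : k ∈ Finset.range (n / 2 + 1)) => n - 2 * k)
  · intro k hk
    rw [Finset.mem_range] at hk
    simp only [Finset.mem_filter, Finset.mem_range]
    omega
  · intro k hk k' hk' heq
    rw [Finset.mem_range] at hk hk'
    omega
  · intro l hl
    simp only [Finset.mem_filter, Finset.mem_range] at hl
    exact ⟨(n - l) / 2, by rw [Finset.mem_range]; omega, by omega⟩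
  · intro k hk
    rw [Finset.mem_range] at hk
    have e1 : n - (n - 2 * k) = 2 * k := by omega
    rw [e1, show 2 * k / 2 = k by omega]
    ring
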